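/- For any odd prime power q, with n = (q+1)/2, and for every k with 1 ≤ k ≤ n, there exists an MDS LCD [n,k] code over F_q, i.e., a k-dimensional LCD subspace of F_q^n with minimum distance n − k + 1. -/

import Mathlib

/-- The Euclidean dual of a code `C ⊆ R^n`:
`C^⊥ = {x : x · c = 0 for all c ∈ C}` where `x · y = ∑ i, x i * y i`. -/
def dualCode {R : Type*} [CommRing R] {n : ℕ} (C : Submodule R (Fin n → R)) :
    Submodule R (Fin n → R) where
  carrier := {x | ∀ c ∈ C, ∑ i, x i * c i = 0}
  zero_mem' := by intro c hc; simp
  add_mem' := by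
    intro a b ha hb c hc
    have h1 := ha c hc
    have h2 := hb c hc
    simp only [Pi.add_apply, add_mul, Finset.sum_add_distrib, h1, h2, add_zero]
  smul_mem' := by
    intro r x hx c hc
    have h1 := hx c hc
    simp only [Pi.smul_apply, smul_eq_mul, mul_assoc, ← Finset.mul_sum, h1, mul_zero]

/-- A code is LCD (linear complementary dual) if `C ∩ C^⊥ = {0}`. -/
def IsLCD {R : Type*} [CommRing R] {n : ℕ} (C : Submodule R (Fin n → R)) : Prop :=
  C ⊓ dualCode C = ⊥

open Classical in
/-- The Hamming weight of a vector: the number of nonzero coordinates. -/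
noncomputable def wt {R : Type*} [Zero R] {n : ℕ} (x : Fin n → R) : ℕ :=
  (Finset.univ.filter fun i => x i ≠ 0).card

/-- `C` has minimum distance `d`: some nonzero codeword has weight `d`
and every nonzero codeword has weight at least `d`. -/
def hasMinDist {F : Type*} [Field F] {n : ℕ} (C : Submodule F (Fin n → F)) (d : ℕ) : Prop :=
  (∃ c ∈ C, c ≠ 0 ∧ wt c = d) ∧ ∀ c ∈ C, c ≠ 0 → d ≤ wt c


section AuxMDSLCD
open Matrix Finset Polynomial

variable {F : Type*} [Field F]



/-- Sum of affine functions is affine. -/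
lemma affine_sum {ι : Type*} (s : Finset ι) (g : ι → F → F)
    (h : ∀ i ∈ s, ∃ c0 c1 : F, ∀ t, g i t = c0 + c1 * t) :
    ∃ c0 c1 : F, ∀ t, (∑ i ∈ s, g i t) = c0 + c1 * t := by
  classical
  induction s using Finset.induction_on with
  | empty => exact ⟨0, 0, by simp⟩
  | insert a s hnotmem ih =>
    obtain ⟨c0, c1, hc⟩ := h a (Finset.mem_insert_self a s)
    obtain ⟨d0, d1, hd⟩ := ih (fun i hi => h i (Finset.mem_insert_of_mem hi))
    exact ⟨c0 + d0, c1 + d1, fun t => by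
      rw [Finset.sum_insert hnotmem, hc, hd]; ring⟩

/-- determinant of a rank-one update is affine in the parameter. -/
lemma det_affine {k : ℕ} (M : Matrix (Fin k) (Fin k) F) (v w : Fin k → F) :
    ∃ c0 c1 : F, ∀ t, (M + t • vecMulVec v w).det = c0 + c1 * t := by
  classical
  set f := (detRowAlternating : (Fin k → F) [⋀^Fin k]→ₗ[F] F).toMultilinearMap with hf
  have key : ∀ t : F, (M + t • vecMulVec v w).det =
      ∑ s : Finset (Fin k), (∏ i ∈ s, (t * v i)) *
        (f (s.piecewise (fun _ => w) M) : F) := by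
    intro t
    have h1 : (M + t • vecMulVec v w).det =
        f ((fun i => (t * v i) • w) + fun i => M i) := by
      show f _ = f _
      congr 1
      funext i j
      simp [vecMulVec, mul_assoc, add_comm]
    rw [h1, f.map_add_univ]
    refine Finset.sum_congr rfl fun s _ => ?_
    have h2 : s.piecewise (fun i => (t * v i) • w) (fun i => M i)
        = s.piecewise (fun i => (t * v i) • (s.piecewise (fun _ => w) M) i)
            (s.piecewise (fun _ => w) M) := by
      funext i
      by_cases hi : i ∈ s <;> simp [Finset.piecewise, hi]
    rw [h2, f.map_piecewise_smul]
    simp [smul_eq_mul]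
  have : ∀ s : Finset (Fin k), ∃ c0 c1 : F, ∀ t : F,
      (∏ i ∈ s, (t * v i)) * (f (s.piecewise (fun _ => w) M) : F) = c0 + c1 * t := by
    intro s
    rcases Nat.lt_or_ge s.card 2 with hc | hc
    · interval_cases h : s.card
      · rw [Finset.card_eq_zero] at h
        subst h
        exact ⟨f (Finset.piecewise ∅ (fun _ => w) M), 0, fun t => by simp⟩
      · rw [Finset.card_eq_one] at h
        obtain ⟨a, rfl⟩ := h
        exact ⟨0, v a * f (Finset.piecewise {a} (fun _ => w) M), fun t => by
          simp; ring⟩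
    · obtain ⟨a, ha, b, hb, hab⟩ := Finset.one_lt_card.1 hc
      have : (f (s.piecewise (fun _ => w) M) : F) = 0 := by
        apply (detRowAlternating : (Fin k → F) [⋀^Fin k]→ₗ[F] F).map_eq_zero_of_eq _ _ hab
        simp [Finset.piecewise, ha, hb]
      exact ⟨0, 0, fun t => by rw [this]; ring⟩
  choose c0 c1 hc using this
  exact ⟨∑ s : Finset (Fin k), c0 s, ∑ s : Finset (Fin k), c1 s, fun t => by
    rw [key t, Finset.sum_congr rfl (fun s _ => hc s t), Finset.sum_add_distrib, Finset.sum_mul]⟩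


lemma grid_lemma {m : ℕ} (f : (Fin m → F) → F)
    (haff : ∀ (x : Fin m → F) (j : Fin m), ∃ c0 c1 : F, ∀ t,
      f (Function.update x j t) = c0 + c1 * t)
    (x0 : Fin m → F) (hx0 : f x0 ≠ 0)
    (S : Finset F) (hS : 2 ≤ S.card) :
    ∃ u : Fin m → F, (∀ i, u i ∈ S) ∧ f u ≠ 0 := by
  classical
  obtain ⟨a, ha, b, hb, hab⟩ := Finset.one_lt_card.1 hS
  have key : ∀ j : ℕ, j ≤ m → ∃ u : Fin m → F, (∀ i : Fin m, (i : ℕ) < j → u i ∈ S) ∧ f u ≠ 0 := by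
    intro j
    induction j with
    | zero => exact fun _ => ⟨x0, fun i hi => absurd hi (Nat.not_lt_zero _), hx0⟩
    | succ j ih =>
      intro hj
      obtain ⟨u, hu, hfu⟩ := ih (Nat.le_of_succ_le hj)
      set i : Fin m := ⟨j, hj⟩ with hidef
      obtain ⟨c0, c1, hc⟩ := haff u i
      have hnz : c0 + c1 * a ≠ 0 ∨ c0 + c1 * b ≠ 0 := by
        by_contra h
        push_neg at h
        obtain ⟨h1, h2⟩ := h
        have hc1 : c1 = 0 := by
          have : c1 * (a - b) = 0 := by rw [mul_sub]; linear_combination h1 - h2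
          rcases mul_eq_zero.1 this with h | h
          · exact h
          · exact absurd (sub_eq_zero.1 h) hab
        have hc0 : c0 = 0 := by rw [hc1, zero_mul, add_zero] at h1; exact h1
        apply hfu
        have := hc (u i)
        rwa [Function.update_eq_self, hc0, hc1, zero_mul, add_zero] at this
      have main : ∀ t ∈ S, c0 + c1 * t ≠ 0 → ∃ u : Fin m → F,
          (∀ i' : Fin m, (i' : ℕ) < j + 1 → u i' ∈ S) ∧ f u ≠ 0 := by
        intro t ht hnzt
        refine ⟨Function.update u i t, fun i' hi' => ?_, by rw [hc t]; exact hnzt⟩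
        by_cases h : i' = i
        · rw [h, Function.update_self]; exact ht
        · rw [Function.update_of_ne h]
          apply hu
          have : (i' : ℕ) ≠ j := fun hh => h (Fin.ext hh)
          omega
      rcases hnz with h | h
      · exact main a ha h
      · exact main b hb h
  obtain ⟨u, hu, hfu⟩ := key m le_rfl
  exact ⟨u, fun i => hu i i.isLt, hfu⟩

lemma conj_std_basis {n k : ℕ} (V : Matrix (Fin n) (Fin k) F) (j : Fin n) :
    Vᵀ * Matrix.single j j (1 : F) * V = vecMulVec (fun a => V j a) (fun b => V j b) := by
  ext a b
  simp [Matrix.mul_apply, Matrix.single, vecMulVec_apply, ite_and,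
    Finset.sum_ite_eq, Finset.sum_ite_eq']

lemma diag_update {n : ℕ} (u : Fin n → F) (j : Fin n) (t : F) :
    diagonal (Function.update u j t) =
      diagonal (Function.update u j 0) + t • Matrix.single j j (1 : F) := by
  ext i i'
  by_cases h : i = i'
  · subst h
    by_cases h2 : i = j
    · subst h2; simp [Matrix.single]
    · simp [Matrix.single, Function.update_of_ne h2, h2, Ne.symm h2]
  · rw [Matrix.diagonal_apply_ne _ h, Matrix.add_apply, Matrix.diagonal_apply_ne _ h,
      Matrix.smul_apply, Matrix.single, Matrix.of_apply]
    have : ¬(j = i ∧ j = i') := fun ⟨h1, h2⟩ => h (h1 ▸ h2 ▸ rfl)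
    simp [this]

lemma conj_diag_update {n k : ℕ} (V : Matrix (Fin n) (Fin k) F) (u : Fin n → F) (j : Fin n) (t : F) :
    Vᵀ * diagonal (Function.update u j t) * V =
      Vᵀ * diagonal (Function.update u j 0) * V +
        t • vecMulVec (fun a => V j a) (fun b => V j b) := by
  rw [diag_update, Matrix.mul_add, Matrix.add_mul, Matrix.mul_smul, Matrix.smul_mul,
    conj_std_basis]


lemma two_squares [Fintype F] (h4 : 4 ≤ Fintype.card F) :
    ∃ a b : F, a ≠ 0 ∧ b ≠ 0 ∧ a * a ≠ b * b := by
  by_contra h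
  push_neg at h
  have hall : ∀ x : F, x ≠ 0 → x * x = 1 := by
    intro x hx
    simpa using h x 1 hx one_ne_zero
  classical
  have hpne : (X ^ 2 - C 1 : Polynomial F) ≠ 0 := by
    intro h0
    have h2 : ((X : Polynomial F) ^ 2 - C 1).natDegree = 2 := natDegree_X_pow_sub_C
    rw [h0] at h2
    simp at h2
  have hsub : (Finset.univ.erase (0 : F)) ⊆ (X ^ 2 - C 1 : Polynomial F).roots.toFinset := by
    intro x hx
    rw [Multiset.mem_toFinset, mem_roots hpne]
    have hx0 : x ≠ 0 := Finset.ne_of_mem_erase hx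
    have := hall x hx0
    simp only [IsRoot, eval_sub, eval_pow, eval_X, eval_C, sq, eval_mul]
    rw [this]; ring
  have hcard := Finset.card_le_card hsub
  rw [Finset.card_erase_of_mem (Finset.mem_univ 0)] at hcard
  have h1 : ((X ^ 2 - C 1 : Polynomial F).roots.toFinset).card ≤ 2 := by
    refine le_trans (Multiset.toFinset_card_le _) (le_trans (card_roots' _) ?_)
    rw [natDegree_X_pow_sub_C]
  have : Fintype.card F - 1 ≤ 2 := by
    calc Fintype.card F - 1 = Finset.univ.card - 1 := by rw [Finset.card_univ]
    _ ≤ 2 := le_trans hcard h1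
  omega
/-- The Gram matrix at the indicator weights of the first `k` points equals `Wᵀ * W`
for the square Vandermonde `W`. -/
lemma gram_indicator {n k : ℕ} (hk2 : k ≤ n) (α : Fin n → F) :
    (Matrix.of fun (i : Fin n) (a : Fin k) => α i ^ (a : ℕ))ᵀ *
        diagonal (fun i : Fin n => if (i : ℕ) < k then (1 : F) else 0) *
        (Matrix.of fun (i : Fin n) (a : Fin k) => α i ^ (a : ℕ)) =
      (vandermonde fun j : Fin k => α (Fin.castLE hk2 j))ᵀ *
        (vandermonde fun j : Fin k => α (Fin.castLE hk2 j)) := by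
  classical
  ext a b
  rw [Matrix.mul_assoc, Matrix.mul_apply, Matrix.mul_apply]
  have lhs_eq : ∀ r : Fin n, (Matrix.of fun (i : Fin n) (a : Fin k) => α i ^ (a : ℕ))ᵀ a r *
      (diagonal (fun i : Fin n => if (i : ℕ) < k then (1 : F) else 0) *
        Matrix.of (fun (i : Fin n) (a : Fin k) => α i ^ (a : ℕ))) r b =
      if (r : ℕ) < k then α r ^ (a : ℕ) * α r ^ (b : ℕ) else 0 := by
    intro r
    rw [Matrix.diagonal_mul, Matrix.transpose_apply]
    by_cases hr : (r : ℕ) < k <;> simp [hr, mul_comm]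
  rw [Finset.sum_congr rfl fun r _ => lhs_eq r, Finset.sum_ite, Finset.sum_const_zero, add_zero]
  refine Finset.sum_bij
    (fun (r : Fin n) (hr : r ∈ Finset.univ.filter fun r : Fin n => (r : ℕ) < k) =>
      (⟨(r : ℕ), (Finset.mem_filter.1 hr).2⟩ : Fin k)) ?_ ?_ ?_ ?_
  · intro r hr; exact Finset.mem_univ _
  · intro r1 h1 r2 h2 heq
    rw [Fin.ext_iff] at heq ⊢
    exact heq
  · intro j hj
    refine ⟨Fin.castLE hk2 j, ?_, rfl⟩
    simp only [Finset.mem_filter, Finset.mem_univ, true_and]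
    exact j.isLt
  · intro r hr
    rfl

lemma exists_good_w [Fintype F] {n k : ℕ} (hk1 : 1 ≤ k) (hk2 : k ≤ n)
    (hn : 2 * n = Fintype.card F + 1) (α : Fin n → F) (hα : Function.Injective α) :
    ∃ w : Fin n → F, (∀ i, w i ≠ 0) ∧
      ((Matrix.of fun (i : Fin n) (a : Fin k) => α i ^ (a : ℕ))ᵀ *
        diagonal (fun i => w i * w i) *
        (Matrix.of fun (i : Fin n) (a : Fin k) => α i ^ (a : ℕ))).det ≠ 0 := by
  classical
  set V : Matrix (Fin n) (Fin k) F := Matrix.of fun (i : Fin n) (a : Fin k) => α i ^ (a : ℕ)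
    with hV
  have hq0 : (Fintype.card F : F) = 0 := FiniteField.cast_card_eq_zero F
  -- case k = n
  rcases eq_or_lt_of_le hk2 with hkn | hklt
  · subst hkn
    refine ⟨fun _ => 1, fun i => one_ne_zero, ?_⟩
    have hdiag : diagonal (fun _ : Fin k => (1 : F) * 1) = (1 : Matrix (Fin k) (Fin k) F) := by
      simp
    rw [hdiag, Matrix.mul_one, Matrix.det_mul, Matrix.det_transpose]
    have hvdm : V = vandermonde α := by ext i a; rfl
    rw [hvdm]
    have := det_vandermonde_ne_zero_iff.2 hα
    exact mul_ne_zero this this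
  -- case k = 1
  rcases eq_or_lt_of_le hk1 with hk1' | hk1''
  · subst hk1'
    refine ⟨fun _ => 1, fun i => one_ne_zero, ?_⟩
    have hdiag : diagonal (fun _ : Fin n => (1 : F) * 1) = (1 : Matrix (Fin n) (Fin n) F) := by
      simp
    rw [hdiag, Matrix.mul_one, Matrix.det_fin_one]
    have : (Vᵀ * V) 0 0 = (n : F) := by
      rw [Matrix.mul_apply]
      simp [hV]
    rw [this]
    intro hzero
    have h2n : ((2 * n : ℕ) : F) = 1 := by
      rw [hn]; push_cast [hq0]; simp
    rw [Nat.cast_mul, hzero, mul_zero] at h2n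
    exact zero_ne_one h2n
  -- case 2 ≤ k < n : field has at least 5 elements
  · have h4 : 4 ≤ Fintype.card F := by omega
    obtain ⟨a, b, ha, hb, hab⟩ := two_squares h4
    set f : (Fin n → F) → F := fun u => (Vᵀ * diagonal u * V).det with hf
    have haff : ∀ (x : Fin n → F) (j : Fin n), ∃ c0 c1 : F, ∀ t,
        f (Function.update x j t) = c0 + c1 * t := by
      intro x j
      obtain ⟨c0, c1, hc⟩ := det_affine (Vᵀ * diagonal (Function.update x j 0) * V)
        (fun a => V j a) (fun b => V j b)
      exact ⟨c0, c1, fun t => by rw [hf]; simp only; rw [conj_diag_update]; exact hc t⟩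
    have hx0 : f (fun i : Fin n => if (i : ℕ) < k then (1 : F) else 0) ≠ 0 := by
      rw [hf]
      simp only
      rw [gram_indicator hk2 α, Matrix.det_mul, Matrix.det_transpose]
      have hinj : Function.Injective fun j : Fin k => α (Fin.castLE hk2 j) :=
        hα.comp (Fin.castLE_injective hk2)
      have := det_vandermonde_ne_zero_iff.2 hinj
      exact mul_ne_zero this this
    have hS : 2 ≤ ({a * a, b * b} : Finset F).card := by
      rw [Finset.card_insert_of_notMem (by simp [hab]), Finset.card_singleton]
    obtain ⟨u, hu, hfu⟩ := grid_lemma f haff _ hx0 ({a * a, b * b} : Finset F) hS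
    refine ⟨fun i => if u i = a * a then a else b, fun i => by simp only; split <;> assumption, ?_⟩
    have : (fun i => (if u i = a * a then a else b) * (if u i = a * a then a else b)) = u := by
      funext i
      rcases Finset.mem_insert.1 (hu i) with h | h
      · rw [h]; simp
      · rw [Finset.mem_singleton] at h
        rw [h]
        have : ¬ (u i = a * a) := by rw [h]; exact Ne.symm hab
        rw [h] at this
        simp [this]
    rw [this]
    exact hfu
-- counting lemma
lemma card_filter_val_lt {n m : ℕ} (hm : m ≤ n) :
    ((Finset.univ : Finset (Fin n)).filter fun (i : Fin n) => (i : ℕ) < m).card = m := by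
  have key : ((Finset.univ : Finset (Fin n)).filter fun (i : Fin n) => (i : ℕ) < m).card
      = (Finset.univ : Finset (Fin m)).card := by
    refine Finset.card_bij (fun (r : Fin n) (hr : r ∈ Finset.univ.filter fun r : Fin n => (r : ℕ) < m)
      => (⟨(r : ℕ), (Finset.mem_filter.1 hr).2⟩ : Fin m)) ?_ ?_ ?_
    · intro r hr; exact Finset.mem_univ _
    · intro r1 h1 r2 h2 heq
      rw [Fin.ext_iff] at heq ⊢
      exact heq
    · intro j hj
      refine ⟨Fin.castLE hm j, ?_, rfl⟩
      simp only [Finset.mem_filter, Finset.mem_univ, true_and, Fin.coe_castLE]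
      exact j.isLt
  rw [key, Finset.card_univ, Fintype.card_fin]

lemma wt_eq {n : ℕ} (x : Fin n → F) (P : Fin n → Prop) [DecidablePred P]
    (h : ∀ i, x i ≠ 0 ↔ P i) : wt x = (Finset.univ.filter P).card := by
  classical
  unfold wt
  congr 1
  apply Finset.filter_congr
  intro i _
  simp [h i]

open Classical in
lemma wt_add_zeros {n : ℕ} (x : Fin n → F) :
    wt x + ((Finset.univ : Finset (Fin n)).filter fun i => x i = 0).card = n := by
  classical
  rw [wt_eq x (fun i => ¬ (x i = 0)) (fun i => Iff.rfl)]
  have := Finset.card_filter_add_card_filter_not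
    (s := (Finset.univ : Finset (Fin n))) (p := fun i => ¬ (x i = 0))
  simp only [Finset.card_univ, Fintype.card_fin, not_not] at this
  have e : (Finset.filter (fun a => x a = 0) (Finset.univ : Finset (Fin n)))
      = Finset.filter (fun i => x i = 0) Finset.univ :=
    Finset.filter_congr (fun i _ => Iff.rfl)
  rw [e] at this
  exact this

lemma main_construction {n k : ℕ} (hk1 : 1 ≤ k) (hk2 : k ≤ n)
    (α : Fin n → F) (hα : Function.Injective α) (w : Fin n → F) (hw : ∀ i, w i ≠ 0)
    (hdet : ((Matrix.of fun (i : Fin n) (a : Fin k) => α i ^ (a : ℕ))ᵀ *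
        diagonal (fun i => w i * w i) *
        (Matrix.of fun (i : Fin n) (a : Fin k) => α i ^ (a : ℕ))).det ≠ 0) :
    ∃ C : Submodule F (Fin n → F),
      Module.finrank F C = k ∧ IsLCD C ∧ hasMinDist C (n - k + 1) := by
  classical
  set V : Matrix (Fin n) (Fin k) F := Matrix.of fun (i : Fin n) (a : Fin k) => α i ^ (a : ℕ)
    with hV
  set A : Matrix (Fin n) (Fin k) F := Matrix.of fun (i : Fin n) (a : Fin k) =>
    w i * α i ^ (a : ℕ) with hA
  set Code : Submodule F (Fin n → F) := LinearMap.range A.mulVecLin with hCode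
  -- row sums
  have hmv : ∀ (v : Fin k → F) (i : Fin n), (A *ᵥ v) i = w i * ∑ a : Fin k, v a * α i ^ (a : ℕ) := by
    intro v i
    show (∑ a, A i a * v a) = _
    rw [Finset.mul_sum]
    refine Finset.sum_congr rfl fun a _ => ?_
    simp only [hA, Matrix.of_apply]
    ring
  -- injectivity of the parametrization
  have hWdet : (vandermonde fun j : Fin k => α (Fin.castLE hk2 j)).det ≠ 0 :=
    det_vandermonde_ne_zero_iff.2 (hα.comp (Fin.castLE_injective hk2))
  have hsolve : ∀ (M : Matrix (Fin k) (Fin k) F), M.det ≠ 0 → ∀ v : Fin k → F,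
      M *ᵥ v = 0 → v = 0 := by
    intro M hM v hv
    have hunit : IsUnit M.det := isUnit_iff_ne_zero.2 hM
    calc v = 1 *ᵥ v := (Matrix.one_mulVec v).symm
    _ = (M⁻¹ * M) *ᵥ v := by rw [Matrix.nonsing_inv_mul M hunit]
    _ = M⁻¹ *ᵥ (M *ᵥ v) := by rw [Matrix.mulVec_mulVec]
    _ = 0 := by rw [hv, Matrix.mulVec_zero]
  have hinj : Function.Injective A.mulVecLin := by
    rw [← LinearMap.ker_eq_bot, LinearMap.ker_eq_bot']
    intro v hv
    have hrow : ∀ i : Fin n, ∑ a : Fin k, v a * α i ^ (a : ℕ) = 0 := by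
      intro i
      have h0 : (A *ᵥ v) i = 0 := by rw [show A *ᵥ v = A.mulVecLin v from rfl, hv]; rfl
      rw [hmv] at h0
      rcases mul_eq_zero.1 h0 with h | h
      · exact absurd h (hw i)
      · exact h
    refine hsolve _ hWdet v (funext fun b => ?_)
    show (∑ a, vandermonde (fun j : Fin k => α (Fin.castLE hk2 j)) b a * v a) = 0
    rw [← hrow (Fin.castLE hk2 b)]
    refine Finset.sum_congr rfl fun a _ => ?_
    rw [Matrix.vandermonde_apply, mul_comm]
  have hrank : Module.finrank F Code = k := by
    rw [hCode, LinearMap.finrank_range_of_inj hinj]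
    simp
  -- Gram matrix
  have hgram : Aᵀ * A = Vᵀ * diagonal (fun i => w i * w i) * V := by
    have hAd : A = diagonal w * V := by
      ext i a
      rw [Matrix.diagonal_mul]
      rfl
    rw [hAd, Matrix.transpose_mul, Matrix.diagonal_transpose,
      Matrix.mul_assoc (Vᵀ), ← Matrix.mul_assoc (diagonal w), Matrix.diagonal_mul_diagonal,
      ← Matrix.mul_assoc]
  have hgramdet : (Aᵀ * A).det ≠ 0 := by rw [hgram]; exact hdet
  -- LCD
  have hlcd : IsLCD Code := by
    rw [IsLCD, eq_bot_iff]
    intro x hx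
    obtain ⟨hxC, hxD⟩ := Submodule.mem_inf.1 hx
    obtain ⟨v, rfl⟩ := hxC
    have hdual : (Aᵀ * A) *ᵥ v = 0 := by
      funext b
      have hyC : A.mulVecLin (Pi.single b 1) ∈ Code := LinearMap.mem_range_self _ _
      have h0 : ∑ i, (A.mulVecLin v) i * (A.mulVecLin (Pi.single b 1)) i = 0 :=
        hxD _ hyC
      have h1 : (A *ᵥ v) ⬝ᵥ (A *ᵥ Pi.single b 1) = 0 := h0
      rw [Matrix.dotProduct_mulVec, ← Matrix.mulVec_transpose, Matrix.mulVec_mulVec] at h1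
      rwa [dotProduct_single, mul_one] at h1
    have hv0 : v = 0 := hsolve _ hgramdet v hdual
    rw [hv0, map_zero]
    exact Submodule.zero_mem ⊥
  -- minimum distance lower bound
  have hlow : ∀ c ∈ Code, c ≠ 0 → n - k + 1 ≤ wt c := by
    intro c hcC hc0
    obtain ⟨v, rfl⟩ := hcC
    have hv0 : v ≠ 0 := by
      rintro rfl
      rw [map_zero] at hc0
      exact hc0 rfl
    set p : Polynomial F := ∑ a : Fin k, Polynomial.C (v a) * Polynomial.X ^ (a : ℕ) with hp
    have hpcoeff : ∀ a : Fin k, p.coeff (a : ℕ) = v a := by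
      intro a
      rw [hp, Polynomial.finset_sum_coeff]
      rw [Finset.sum_eq_single a]
      · simp
      · intro b _ hba
        rw [Polynomial.coeff_C_mul, Polynomial.coeff_X_pow]
        have : ¬ ((a : ℕ) = (b : ℕ)) := fun h => hba (Fin.ext h.symm)
        simp [this]
      · simp
    have hpne : p ≠ 0 := by
      intro h0
      apply hv0
      funext a
      simp only [Pi.zero_apply]
      rw [← hpcoeff a, h0, Polynomial.coeff_zero]
    have hdeg : p.natDegree ≤ k - 1 := by
      refine Polynomial.natDegree_sum_le_of_forall_le _ _ fun a _ => ?_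
      refine le_trans (Polynomial.natDegree_C_mul_X_pow_le _ _) ?_
      have := a.isLt
      omega
    have heval : ∀ i, (A.mulVecLin v) i = w i * p.eval (α i) := by
      intro i
      show (A *ᵥ v) i = _
      rw [hmv, hp]
      congr 1
      rw [Polynomial.eval_finset_sum]
      refine Finset.sum_congr rfl fun a _ => ?_
      simp
    set Z := (Finset.univ : Finset (Fin n)).filter fun i => (A.mulVecLin v) i = 0 with hZ
    have hZcard : Z.card ≤ k - 1 := by
      have hmaps : ∀ i ∈ Z, α i ∈ p.roots.toFinset := by
        intro i hi
        rw [Multiset.mem_toFinset, Polynomial.mem_roots hpne]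
        have h0 : (A.mulVecLin v) i = 0 := (Finset.mem_filter.1 hi).2
        rw [heval i] at h0
        rcases mul_eq_zero.1 h0 with h | h
        · exact absurd h (hw i)
        · exact h
      calc Z.card ≤ p.roots.toFinset.card :=
            Finset.card_le_card_of_injOn α hmaps (Function.Injective.injOn hα)
      _ ≤ Multiset.card p.roots := Multiset.toFinset_card_le _
      _ ≤ p.natDegree := Polynomial.card_roots' p
      _ ≤ k - 1 := hdeg
    have hsum := wt_add_zeros (A.mulVecLin v)
    rw [← hZ] at hsum
    omega
  -- witness of weight n - k + 1
  have hk1n : k - 1 ≤ n := by omega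
  set p0 : Polynomial F :=
    ∏ j : Fin (k - 1), (Polynomial.X - Polynomial.C (α (Fin.castLE hk1n j))) with hp0
  have hdeg0 : p0.natDegree = k - 1 := by
    rw [hp0, Polynomial.natDegree_prod_of_monic _ _ fun j _ => Polynomial.monic_X_sub_C _]
    simp
  set v0 : Fin k → F := fun a => p0.coeff (a : ℕ) with hv0def
  have hsum0 : ∀ x : F, ∑ a : Fin k, v0 a * x ^ (a : ℕ) = p0.eval x := by
    intro x
    rw [Polynomial.eval_eq_sum_range' (n := k) (by omega) x]
    rw [Fin.sum_univ_eq_sum_range (f := fun a : ℕ => p0.coeff a * x ^ a)]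
  have hc0eval : ∀ i, (A.mulVecLin v0) i = w i * p0.eval (α i) := by
    intro i
    show (A *ᵥ v0) i = _
    rw [hmv, hsum0]
  have hzero_iff : ∀ i : Fin n, (A.mulVecLin v0) i = 0 ↔ (i : ℕ) < k - 1 := by
    intro i
    rw [hc0eval i]
    constructor
    · intro h0
      rcases mul_eq_zero.1 h0 with h | h
      · exact absurd h (hw i)
      · rw [hp0, Polynomial.eval_prod] at h
        obtain ⟨j, _, hj⟩ := Finset.prod_eq_zero_iff.1 h
        rw [Polynomial.eval_sub, Polynomial.eval_X, Polynomial.eval_C, sub_eq_zero] at hj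
        have := hα hj
        rw [this]
        exact j.isLt
    · intro hik
      apply mul_eq_zero_of_right
      rw [hp0, Polynomial.eval_prod]
      refine Finset.prod_eq_zero (Finset.mem_univ (⟨(i : ℕ), hik⟩ : Fin (k - 1))) ?_
      rw [Polynomial.eval_sub, Polynomial.eval_X, Polynomial.eval_C, sub_eq_zero]
      exact congrArg α (Fin.ext rfl)
  have hwt0 : wt (A.mulVecLin v0) = n - k + 1 := by
    rw [wt_eq (A.mulVecLin v0) (fun i => ¬ ((i : ℕ) < k - 1))
      (fun i => not_iff_not.2 (hzero_iff i))]
    have hsplit := Finset.card_filter_add_card_filter_not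
      (s := (Finset.univ : Finset (Fin n))) (p := fun i : Fin n => (i : ℕ) < k - 1)
    rw [card_filter_val_lt hk1n] at hsplit
    rw [Finset.card_univ, Fintype.card_fin] at hsplit
    omega
  have hc0ne : A.mulVecLin v0 ≠ 0 := by
    intro h0
    rw [h0] at hwt0
    have : wt (0 : Fin n → F) = 0 := by
      unfold wt
      simp
    omega
  exact ⟨Code, hrank, hlcd, ⟨A.mulVecLin v0, LinearMap.mem_range_self _ _, hc0ne, hwt0⟩, hlow⟩

end AuxMDSLCD

/-- For any odd prime power `q`, with `n = (q + 1) / 2`, and every `1 ≤ k ≤ n`,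
there exists an MDS LCD `[n, k]` code over `F_q`. -/
theorem exists_mds_lcd_odd_half {F : Type*} [Field F] [Fintype F] {n k : ℕ}
    (hodd : Odd (Fintype.card F))
    (hn : 2 * n = Fintype.card F + 1) (hk1 : 1 ≤ k) (hk2 : k ≤ n) :
    ∃ C : Submodule F (Fin n → F),
      Module.finrank F C = k ∧ IsLCD C ∧ hasMinDist C (n - k + 1) := by
  classical
  have hcard2 : 2 ≤ Fintype.card F := Fintype.one_lt_card
  have hle : n ≤ Fintype.card F := by omega
  set e := Fintype.equivFin F with he
  set α : Fin n → F := fun i => e.symm (Fin.castLE hle i) with hα'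
  have hα : Function.Injective α := fun i j hij => by
    have := e.symm.injective hij
    exact Fin.castLE_injective hle this
  obtain ⟨w, hw, hdet⟩ := exists_good_w hk1 hk2 hn α hα
  exact main_construction hk1 hk2 α hα w hw hdet
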